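/- Let H be a real inner product space, let ρ, m, k, β₁ be positive real numbers, let ψ₁ ∈ H, and let δ > 0 satisfy δ ≤ 1, δ‖ψ₁‖ ≤ 1, δβ₁ ≤ 1 and δ(ρ‖ψ₁‖ + mβ₁) ≤ k. For v ∈ H and w, z ∈ ℝ define E := (1/2)(ρ‖v‖² + m w² + k z²) and G := ρ‖v‖² + m w² + k z² + δρ z ⟨v, ψ₁⟩ + δ m β₁ z w. Then E ≤ G ≤ 3E. -/

import Mathlib

/-- Equivalence of the natural energy `E` and the modified ('particular')
energy `G` for `δ` small enough: `E ≤ G ≤ 3E`. -/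
theorem natural_and_particular_energy_equivalent
    {H : Type*} [NormedAddCommGroup H] [InnerProductSpace ℝ H]
    (ρ m k β₁ : ℝ) (hρ : 0 < ρ) (hm : 0 < m) (hk : 0 < k) (hβ₁ : 0 < β₁)
    (ψ₁ : H) (δ : ℝ) (hδ : 0 < δ)
    (hδ1 : δ ≤ 1) (hδ2 : δ * ‖ψ₁‖ ≤ 1) (hδ3 : δ * β₁ ≤ 1)
    (hδ4 : δ * (ρ * ‖ψ₁‖ + m * β₁) ≤ k)
    (v : H) (w z : ℝ) :
    (1 / 2) * (ρ * ‖v‖ ^ 2 + m * w ^ 2 + k * z ^ 2) ≤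
        ρ * ‖v‖ ^ 2 + m * w ^ 2 + k * z ^ 2
          + δ * ρ * z * (inner ℝ v ψ₁ : ℝ) + δ * m * β₁ * z * w ∧
      ρ * ‖v‖ ^ 2 + m * w ^ 2 + k * z ^ 2
          + δ * ρ * z * (inner ℝ v ψ₁ : ℝ) + δ * m * β₁ * z * w ≤
        3 * ((1 / 2) * (ρ * ‖v‖ ^ 2 + m * w ^ 2 + k * z ^ 2)) := by
  set i : ℝ := (inner ℝ v ψ₁ : ℝ) with hi
  have hn : (0:ℝ) ≤ ‖ψ₁‖ := norm_nonneg _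
  have ha : (0:ℝ) ≤ ‖v‖ := norm_nonneg _
  have hiv : |i| ≤ ‖v‖ * ‖ψ₁‖ := abs_real_inner_le_norm v ψ₁
  have hzv : |z * i| ≤ |z| * (‖v‖ * ‖ψ₁‖) := by
    rw [abs_mul]
    exact mul_le_mul_of_nonneg_left hiv (abs_nonneg z)
  have h2ab : |z| * ‖v‖ ≤ (z ^ 2 + ‖v‖ ^ 2) / 2 := by
    nlinarith [sq_nonneg (|z| - ‖v‖), sq_abs z]
  have h1 : |z * i| ≤ ‖ψ₁‖ * ((z ^ 2 + ‖v‖ ^ 2) / 2) := by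
    calc |z * i| ≤ |z| * (‖v‖ * ‖ψ₁‖) := hzv
      _ = (|z| * ‖v‖) * ‖ψ₁‖ := by ring
      _ ≤ ((z ^ 2 + ‖v‖ ^ 2) / 2) * ‖ψ₁‖ := mul_le_mul_of_nonneg_right h2ab hn
      _ = ‖ψ₁‖ * ((z ^ 2 + ‖v‖ ^ 2) / 2) := by ring
  have h2 : |z * w| ≤ (z ^ 2 + w ^ 2) / 2 := by
    nlinarith [sq_nonneg (|z| - |w|), sq_abs z, sq_abs w, abs_mul z w, abs_nonneg (z*w)]
  have hb1 := abs_le.mp h1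
  have hb2 := abs_le.mp h2
  have hkey : |δ * ρ * z * i + δ * m * β₁ * z * w|
      ≤ (1 / 2) * (ρ * ‖v‖ ^ 2 + m * w ^ 2 + k * z ^ 2) := by
    have hA : δ * ρ * z * i ≤ δ * ρ * (‖ψ₁‖ * ((z ^ 2 + ‖v‖ ^ 2) / 2)) := by
      have : z * i ≤ ‖ψ₁‖ * ((z ^ 2 + ‖v‖ ^ 2) / 2) := hb1.2
      linarith [mul_le_mul_of_nonneg_left this (le_of_lt (mul_pos hδ hρ))]
    have hA' : -(δ * ρ * (‖ψ₁‖ * ((z ^ 2 + ‖v‖ ^ 2) / 2))) ≤ δ * ρ * z * i := by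
      have : -(‖ψ₁‖ * ((z ^ 2 + ‖v‖ ^ 2) / 2)) ≤ z * i := hb1.1
      linarith [mul_le_mul_of_nonneg_left this (le_of_lt (mul_pos hδ hρ))]
    have hB : δ * m * β₁ * z * w ≤ δ * m * β₁ * ((z ^ 2 + w ^ 2) / 2) := by
      have hpos : (0:ℝ) < δ * m * β₁ := by positivity
      linarith [mul_le_mul_of_nonneg_left hb2.2 (le_of_lt hpos)]
    have hB' : -(δ * m * β₁ * ((z ^ 2 + w ^ 2) / 2)) ≤ δ * m * β₁ * z * w := by
      have hpos : (0:ℝ) < δ * m * β₁ := by positivity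
      linarith [mul_le_mul_of_nonneg_left hb2.1 (le_of_lt hpos)]
    rw [abs_le]
    constructor
    · have hv2 : δ * ρ * ‖ψ₁‖ * ‖v‖ ^ 2 ≤ ρ * ‖v‖ ^ 2 := by
        linarith [mul_le_mul_of_nonneg_left (mul_le_mul_of_nonneg_right hδ2 (sq_nonneg ‖v‖)) hρ.le]
      have hw2 : δ * m * β₁ * w ^ 2 ≤ m * w ^ 2 := by
        linarith [mul_le_mul_of_nonneg_left (mul_le_mul_of_nonneg_right hδ3 (sq_nonneg w)) hm.le]
      have hz2 : δ * (ρ * ‖ψ₁‖ + m * β₁) * z ^ 2 ≤ k * z ^ 2 :=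
        mul_le_mul_of_nonneg_right hδ4 (sq_nonneg z)
      linarith [hA', hB']
    · have hv2 : δ * ρ * ‖ψ₁‖ * ‖v‖ ^ 2 ≤ ρ * ‖v‖ ^ 2 := by
        linarith [mul_le_mul_of_nonneg_left (mul_le_mul_of_nonneg_right hδ2 (sq_nonneg ‖v‖)) hρ.le]
      have hw2 : δ * m * β₁ * w ^ 2 ≤ m * w ^ 2 := by
        linarith [mul_le_mul_of_nonneg_left (mul_le_mul_of_nonneg_right hδ3 (sq_nonneg w)) hm.le]
      have hz2 : δ * (ρ * ‖ψ₁‖ + m * β₁) * z ^ 2 ≤ k * z ^ 2 :=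
        mul_le_mul_of_nonneg_right hδ4 (sq_nonneg z)
      linarith [hA, hB]
  have := abs_le.mp hkey
  constructor <;> linarith [this.1, this.2]
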